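/- Let n ≥ 2 be an integer, q a complex number, and k, m ∈ {1,…,n} with k ≠ m. Then ∑_{σ ∈ S_n, σ(n−1) = k, σ(n) = m} q^{2ℓ(σ)} = q^{4n − 2m − 2k − 2 + 2δ_{k>m}} · ∑_{τ ∈ S_{n−2}} q^{2ℓ(τ)}, where δ_{k>m} = 1 if k > m and δ_{k>m} = 0 otherwise. (Equivalently, when q ≠ 0 and q^2 ≠ 1, the left-hand side equals [n−2]! · q^{(n−2)(n−3)/2} · q^{4n−2m−2} · q^{−2k+2δ_{k>m}}.) -/

import Mathlib

open Finset
set_option maxHeartbeats 1000000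

/-- The number of inversions (the length) of a permutation of `Fin k`. -/
def inversions {k : ℕ} (σ : Equiv.Perm (Fin k)) : ℕ :=
  (Finset.univ.filter fun p : Fin k × Fin k => p.1 < p.2 ∧ σ p.2 < σ p.1).card



def gg (lo hi x : ℕ) : ℕ := if x < lo then x else if x + 1 < hi then x + 1 else x + 2
def hh (lo hi y : ℕ) : ℕ := if y < lo then y else if y < hi then y - 1 else y - 2

lemma gg_lt {n lo hi x : ℕ} (h1 : lo < hi) (h2 : hi < n) (hx : x < n - 2) :
    gg lo hi x < n := by unfold gg; split_ifs <;> omega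
lemma gg_ne_lo {lo hi x : ℕ} (h1 : lo < hi) : gg lo hi x ≠ lo := by
  unfold gg; split_ifs <;> omega
lemma gg_ne_hi {lo hi x : ℕ} (h1 : lo < hi) : gg lo hi x ≠ hi := by
  unfold gg; split_ifs <;> omega
lemma hh_gg {lo hi x : ℕ} (h1 : lo < hi) : hh lo hi (gg lo hi x) = x := by
  unfold gg hh; split_ifs <;> omega
lemma gg_hh {lo hi y : ℕ} (h1 : lo < hi) (h2 : y ≠ lo) (h3 : y ≠ hi) :
    gg lo hi (hh lo hi y) = y := by
  unfold gg hh; split_ifs <;> omega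
lemma hh_lt {n lo hi y : ℕ} (h1 : lo < hi) (h2 : hi < n) (hy : y < n)
    (h3 : y ≠ lo) (h4 : y ≠ hi) : hh lo hi y < n - 2 := by
  unfold hh; split_ifs <;> omega
lemma gg_lt_gg {lo hi x y : ℕ} : gg lo hi x < gg lo hi y ↔ x < y := by
  unfold gg; split_ifs <;> omega

lemma gg_ne {A B x : ℕ} (hAB : A ≠ B) :
    gg (min A B) (max A B) x ≠ A ∧ gg (min A B) (max A B) x ≠ B := by
  have := gg_ne_lo (lo := min A B) (hi := max A B) (x := x) (by omega)
  have := gg_ne_hi (lo := min A B) (hi := max A B) (x := x) (by omega)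
  omega

variable {n A B : ℕ}

/-- From a permutation `τ` of `Fin (n-2)`, the permutation of `Fin n` sending
position `n-2` to `A`, position `n-1` to `B`, and the rest order-compatibly via `τ`. -/
def Bwd (hn : 2 ≤ n) (hA : A < n) (hB : B < n) (hAB : A ≠ B)
    (τ : Equiv.Perm (Fin (n - 2))) : Equiv.Perm (Fin n) where
  toFun p := if hp : (p : ℕ) < n - 2 then
      ⟨gg (min A B) (max A B) (τ ⟨p, hp⟩), gg_lt (by omega) (by omega) (τ ⟨p, hp⟩).isLt⟩
    else if (p : ℕ) = n - 2 then ⟨A, hA⟩ else ⟨B, hB⟩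
  invFun v := if h1 : (v : ℕ) = A then ⟨n - 2, by omega⟩
    else if h2 : (v : ℕ) = B then ⟨n - 1, by omega⟩
    else Fin.castLE (by omega)
      (τ.symm ⟨hh (min A B) (max A B) v,
        hh_lt (n := n) (by omega) (by omega) v.isLt (by omega) (by omega)⟩)
  left_inv p := by
    dsimp only
    by_cases hp : (p : ℕ) < n - 2
    · rw [dif_pos hp]
      have h1 := (gg_ne (x := (τ ⟨p, hp⟩ : ℕ)) hAB).1
      have h2 := (gg_ne (x := (τ ⟨p, hp⟩ : ℕ)) hAB).2
      rw [dif_neg h1, dif_neg h2]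
      simp only [hh_gg (show min A B < max A B by omega), Fin.eta, Equiv.symm_apply_apply]
      apply Fin.ext; rfl
    · rw [dif_neg hp]
      by_cases hp2 : (p : ℕ) = n - 2
      · rw [if_pos hp2, dif_pos rfl]; exact Fin.ext hp2.symm
      · rw [if_neg hp2, dif_neg (Ne.symm hAB), dif_pos rfl]
        apply Fin.ext
        have := p.isLt
        show n - 1 = (p : ℕ)
        omega
  right_inv v := by
    dsimp only
    by_cases h1 : (v : ℕ) = A
    · rw [dif_pos h1, dif_neg (show ¬(n - 2 < n - 2) by omega), if_pos rfl]
      exact Fin.ext h1.symm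
    · rw [dif_neg h1]
      by_cases h2 : (v : ℕ) = B
      · rw [dif_pos h2, dif_neg (show ¬(n - 1 < n - 2) by omega),
          if_neg (show ¬(n - 1 = n - 2) by omega)]
        exact Fin.ext h2.symm
      · rw [dif_neg h2]
        have hlt : ((Fin.castLE (show n - 2 ≤ n by omega) (τ.symm ⟨hh (min A B) (max A B) v,
            hh_lt (n := n) (by omega) (by omega) v.isLt (by omega) (by omega)⟩) :
            Fin n) : ℕ) < n - 2 := (τ.symm _).isLt
        rw [dif_pos hlt]
        apply Fin.ext
        simp only [Fin.coe_castLE, Fin.eta, Equiv.apply_symm_apply]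
        exact gg_hh (by omega) (by omega) (by omega)

lemma Bwd_apply_lt (hn : 2 ≤ n) (hA : A < n) (hB : B < n) (hAB : A ≠ B)
    (τ : Equiv.Perm (Fin (n - 2))) (p : Fin n) (hp : (p : ℕ) < n - 2) :
    ((Bwd hn hA hB hAB τ) p : ℕ) = gg (min A B) (max A B) (τ ⟨p, hp⟩) := by
  show ((if hp : (p : ℕ) < n - 2 then _ else _ : Fin n) : ℕ) = _
  rw [dif_pos hp]

lemma Bwd_apply_n2 (hn : 2 ≤ n) (hA : A < n) (hB : B < n) (hAB : A ≠ B)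
    (τ : Equiv.Perm (Fin (n - 2))) :
    ((Bwd hn hA hB hAB τ) ⟨n - 2, by omega⟩ : ℕ) = A := by
  show ((if hp : ((⟨n - 2, by omega⟩ : Fin n) : ℕ) < n - 2 then _ else _ : Fin n) : ℕ) = _
  rw [dif_neg (by simp), if_pos rfl]

lemma Bwd_apply_n1 (hn : 2 ≤ n) (hA : A < n) (hB : B < n) (hAB : A ≠ B)
    (τ : Equiv.Perm (Fin (n - 2))) :
    ((Bwd hn hA hB hAB τ) ⟨n - 1, by omega⟩ : ℕ) = B := by
  show ((if hp : ((⟨n - 1, by omega⟩ : Fin n) : ℕ) < n - 2 then _ else _ : Fin n) : ℕ) = _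
  rw [dif_neg (by simp; omega), if_neg (by simp; omega)]



lemma card_val_filter (n : ℕ) (pr : ℕ → Prop) [DecidablePred pr] :
    ((univ : Finset (Fin n)).filter fun v => pr v.val).card =
      ((Finset.range n).filter pr).card := by
  apply Finset.card_nbij (i := Fin.val)
  · intro v hv
    simp only [coe_filter, mem_filter, mem_univ, true_and, Set.mem_setOf_eq] at hv
    simp [v.isLt, hv]
  · exact Function.Injective.injOn (Fin.val_injective)
  · intro y hy
    simp only [coe_filter, mem_range, Set.mem_setOf_eq] at hy
    exact ⟨⟨y, hy.1⟩, by simp [hy.2], rfl⟩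

lemma card_gt (n B : ℕ) (hB : B < n) :
    ((univ : Finset (Fin n)).filter fun v => B < v.val).card = n - 1 - B := by
  rw [card_val_filter]
  have : (Finset.range n).filter (fun v => B < v) = Finset.Ico (B + 1) n := by
    ext v; simp [Finset.mem_Ico]; omega
  rw [this, Nat.card_Ico]; omega

lemma card_gt_ne (n A B : ℕ) (hA : A < n) (hB : B < n) (hAB : A ≠ B) :
    ((univ : Finset (Fin n)).filter fun v => A < v.val ∧ v.val ≠ B).card =
      n - 1 - A - (if A < B then 1 else 0) := by
  rw [card_val_filter n (fun v => A < v ∧ v ≠ B)]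
  by_cases h : A < B
  · have : (Finset.range n).filter (fun v => A < v ∧ v ≠ B) =
        (Finset.Ico (A + 1) n).erase B := by
      ext v; simp [Finset.mem_Ico, Finset.mem_erase]; omega
    rw [this, Finset.card_erase_of_mem (by simp [Finset.mem_Ico]; omega), Nat.card_Ico]
    simp [h]; omega
  · have : (Finset.range n).filter (fun v => A < v ∧ v ≠ B) = Finset.Ico (A + 1) n := by
      ext v; simp [Finset.mem_Ico]; omega
    rw [this, Nat.card_Ico]
    simp [h]; omega


/-- count of inversions with second position `n-1`. -/
lemma count_n1 {n B : ℕ} (hn : 2 ≤ n) (σ : Equiv.Perm (Fin n))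
    (h1 : (σ ⟨n - 1, by omega⟩ : ℕ) = B) :
    ((univ : Finset (Fin n × Fin n)).filter fun p =>
        (p.1 < p.2 ∧ σ p.2 < σ p.1) ∧ (p.2 : ℕ) = n - 1).card =
      ((univ : Finset (Fin n)).filter fun v => B < v.val).card := by
  apply card_bij (i := fun p _ => σ p.1)
  · intro p hp
    simp only [mem_filter, mem_univ, true_and] at hp ⊢
    obtain ⟨⟨hlt, hinv⟩, h22⟩ := hp
    have hp2 : p.2 = ⟨n - 1, by omega⟩ := Fin.ext h22
    have : (σ p.2 : ℕ) < (σ p.1 : ℕ) := hinv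
    rw [hp2, h1] at this
    exact this
  · intro p1 hp1 p2 hp2 heq
    simp only [mem_filter, mem_univ, true_and] at hp1 hp2
    have e1 : p1.1 = p2.1 := σ.injective heq
    have e2 : p1.2 = p2.2 := Fin.ext (hp1.2.trans hp2.2.symm)
    exact Prod.ext e1 e2
  · intro v hv
    simp only [mem_filter, mem_univ, true_and] at hv
    have hne : (σ.symm v : ℕ) ≠ n - 1 := by
      intro h
      have : σ.symm v = ⟨n - 1, by omega⟩ := Fin.ext h
      have : v = σ ⟨n - 1, by omega⟩ := by rw [← this, Equiv.apply_symm_apply]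
      have : (v : ℕ) = B := by rw [this, h1]
      omega
    refine ⟨(σ.symm v, ⟨n - 1, by omega⟩), ?_, σ.apply_symm_apply v⟩
    simp only [mem_filter, mem_univ, true_and]
    refine ⟨⟨?_, ?_⟩, by trivial⟩
    · rw [Fin.lt_def]
      have := (σ.symm v).isLt
      simp only []
      omega
    · rw [Fin.lt_def, Equiv.apply_symm_apply]
      show (σ ⟨n - 1, by omega⟩ : ℕ) < (v : ℕ)
      omega

/-- count of inversions with second position `n-2`. -/
lemma count_n2 {n A B : ℕ} (hn : 2 ≤ n) (σ : Equiv.Perm (Fin n))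
    (h2 : (σ ⟨n - 2, by omega⟩ : ℕ) = A) (h1 : (σ ⟨n - 1, by omega⟩ : ℕ) = B) :
    ((univ : Finset (Fin n × Fin n)).filter fun p =>
        (p.1 < p.2 ∧ σ p.2 < σ p.1) ∧ (p.2 : ℕ) = n - 2).card =
      ((univ : Finset (Fin n)).filter fun v => A < v.val ∧ v.val ≠ B).card := by
  apply card_bij (i := fun p _ => σ p.1)
  · intro p hp
    simp only [mem_filter, mem_univ, true_and] at hp ⊢
    obtain ⟨⟨hlt, hinv⟩, h22⟩ := hp
    have hp2 : p.2 = ⟨n - 2, by omega⟩ := Fin.ext h22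
    have hval : (p.1 : ℕ) < (p.2 : ℕ) := hlt
    constructor
    · have h3 : (σ p.2 : ℕ) < (σ p.1 : ℕ) := hinv
      rw [hp2] at h3
      omega
    · intro hBv
      have e1 : σ p.1 = σ ⟨n - 1, by omega⟩ := Fin.ext (hBv.trans h1.symm)
      have : (p.1 : ℕ) = n - 1 := congrArg Fin.val (σ.injective e1)
      omega
  · intro p1 hp1 p2 hp2 heq
    simp only [mem_filter, mem_univ, true_and] at hp1 hp2
    exact Prod.ext (σ.injective heq) (Fin.ext (hp1.2.trans hp2.2.symm))
  · intro v hv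
    simp only [mem_filter, mem_univ, true_and] at hv
    have hne2 : (σ.symm v : ℕ) ≠ n - 2 := by
      intro h
      have : σ.symm v = ⟨n - 2, by omega⟩ := Fin.ext h
      have : v = σ ⟨n - 2, by omega⟩ := by rw [← this, Equiv.apply_symm_apply]
      have : (v : ℕ) = A := by rw [this, h2]
      omega
    have hne1 : (σ.symm v : ℕ) ≠ n - 1 := by
      intro h
      have : σ.symm v = ⟨n - 1, by omega⟩ := Fin.ext h
      have : v = σ ⟨n - 1, by omega⟩ := by rw [← this, Equiv.apply_symm_apply]
      have : (v : ℕ) = B := by rw [this, h1]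
      exact hv.2 this
    refine ⟨(σ.symm v, ⟨n - 2, by omega⟩), ?_, σ.apply_symm_apply v⟩
    simp only [mem_filter, mem_univ, true_and]
    refine ⟨⟨?_, ?_⟩, by trivial⟩
    · rw [Fin.lt_def]
      have := (σ.symm v).isLt
      simp only []
      omega
    · rw [Fin.lt_def, Equiv.apply_symm_apply]
      show (σ ⟨n - 2, by omega⟩ : ℕ) < (v : ℕ)
      omega

lemma gg_inj {lo hi x y : ℕ} : gg lo hi x = gg lo hi y → x = y := by
  unfold gg; split_ifs <;> omega

/-- count of inversions among the first `n-2` positions. -/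
lemma count_lt {n A B : ℕ} (hn : 2 ≤ n) (hA : A < n) (hB : B < n) (hAB : A ≠ B)
    (τ : Equiv.Perm (Fin (n - 2))) :
    ((univ : Finset (Fin n × Fin n)).filter fun p =>
        (p.1 < p.2 ∧ (Bwd hn hA hB hAB τ) p.2 < (Bwd hn hA hB hAB τ) p.1) ∧
          (p.2 : ℕ) < n - 2).card = inversions τ := by
  set σ := Bwd hn hA hB hAB τ with hσdef
  unfold inversions
  apply card_bij (i := fun p hp =>
    ((⟨(p.1 : ℕ), by
        simp only [mem_filter, mem_univ, true_and] at hp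
        have : (p.1 : ℕ) < (p.2 : ℕ) := hp.1.1
        omega⟩ : Fin (n - 2)),
     (⟨(p.2 : ℕ), by
        simp only [mem_filter, mem_univ, true_and] at hp
        exact hp.2⟩ : Fin (n - 2))))
  · intro p hp
    simp only [mem_filter, mem_univ, true_and] at hp ⊢
    obtain ⟨⟨hlt, hinv⟩, h2⟩ := hp
    have h1 : (p.1 : ℕ) < n - 2 := by
      have : (p.1 : ℕ) < (p.2 : ℕ) := hlt
      omega
    constructor
    · exact hlt
    · rw [Fin.lt_def]
      have e2 := Bwd_apply_lt hn hA hB hAB τ p.2 h2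
      have e1 := Bwd_apply_lt hn hA hB hAB τ p.1 h1
      have hval : (σ p.2 : ℕ) < (σ p.1 : ℕ) := hinv
      rw [e1, e2] at hval
      exact gg_lt_gg.mp hval
  · intro p1 hp1 p2 hp2 heq
    simp only [Prod.mk.injEq, Fin.mk.injEq] at heq
    exact Prod.ext (Fin.ext heq.1) (Fin.ext heq.2)
  · intro p' hp'
    simp only [mem_filter, mem_univ, true_and] at hp'
    obtain ⟨hlt', hinv'⟩ := hp'
    have hb1 : ((p'.1 : ℕ)) < n - 2 := p'.1.isLt
    have hb2 : ((p'.2 : ℕ)) < n - 2 := p'.2.isLt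
    refine ⟨((⟨(p'.1 : ℕ), by omega⟩ : Fin n), (⟨(p'.2 : ℕ), by omega⟩ : Fin n)), ?_, ?_⟩
    · simp only [mem_filter, mem_univ, true_and]
      refine ⟨⟨?_, ?_⟩, hb2⟩
      · rw [Fin.lt_def]
        exact hlt'
      · rw [Fin.lt_def]
        have e1 := Bwd_apply_lt hn hA hB hAB τ ⟨(p'.1 : ℕ), by omega⟩ hb1
        have e2 := Bwd_apply_lt hn hA hB hAB τ ⟨(p'.2 : ℕ), by omega⟩ hb2
        rw [← hσdef] at e1 e2
        rw [e1, e2, gg_lt_gg, Fin.eta, Fin.eta]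
        exact hinv'
    · exact Prod.ext (Fin.ext rfl) (Fin.ext rfl)

lemma inversions_Bwd {n A B : ℕ} (hn : 2 ≤ n) (hA : A < n) (hB : B < n) (hAB : A ≠ B)
    (τ : Equiv.Perm (Fin (n - 2))) :
    inversions (Bwd hn hA hB hAB τ) =
      inversions τ + ((n - 1 - B) + (n - 1 - A - (if A < B then 1 else 0))) := by
  classical
  set σ := Bwd hn hA hB hAB τ with hσdef
  have hsplit : ((univ : Finset (Fin n × Fin n)).filter fun p =>
      p.1 < p.2 ∧ σ p.2 < σ p.1) =
      (((univ.filter fun p : Fin n × Fin n =>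
          (p.1 < p.2 ∧ σ p.2 < σ p.1) ∧ (p.2 : ℕ) < n - 2) ∪
        (univ.filter fun p : Fin n × Fin n =>
          (p.1 < p.2 ∧ σ p.2 < σ p.1) ∧ (p.2 : ℕ) = n - 2)) ∪
        (univ.filter fun p : Fin n × Fin n =>
          (p.1 < p.2 ∧ σ p.2 < σ p.1) ∧ (p.2 : ℕ) = n - 1)) := by
    ext p
    simp only [mem_filter, mem_univ, true_and, mem_union]
    have hlt := p.2.isLt
    constructor
    · intro h
      have : (p.2 : ℕ) < n - 2 ∨ (p.2 : ℕ) = n - 2 ∨ (p.2 : ℕ) = n - 1 := by omega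
      tauto
    · tauto
  have d1 : Disjoint
      (univ.filter fun p : Fin n × Fin n =>
        (p.1 < p.2 ∧ σ p.2 < σ p.1) ∧ (p.2 : ℕ) < n - 2)
      (univ.filter fun p : Fin n × Fin n =>
        (p.1 < p.2 ∧ σ p.2 < σ p.1) ∧ (p.2 : ℕ) = n - 2) := by
    rw [Finset.disjoint_left]
    intro p h1 h2
    simp only [mem_filter, mem_univ, true_and] at h1 h2
    omega
  have d2 : Disjoint
      ((univ.filter fun p : Fin n × Fin n =>
        (p.1 < p.2 ∧ σ p.2 < σ p.1) ∧ (p.2 : ℕ) < n - 2) ∪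
       (univ.filter fun p : Fin n × Fin n =>
        (p.1 < p.2 ∧ σ p.2 < σ p.1) ∧ (p.2 : ℕ) = n - 2))
      (univ.filter fun p : Fin n × Fin n =>
        (p.1 < p.2 ∧ σ p.2 < σ p.1) ∧ (p.2 : ℕ) = n - 1) := by
    rw [Finset.disjoint_left]
    intro p h1 h2
    simp only [mem_union, mem_filter, mem_univ, true_and] at h1 h2
    have := p.2.isLt
    rcases h1 with h1 | h1 <;> omega
  show (univ.filter fun p : Fin n × Fin n => p.1 < p.2 ∧ σ p.2 < σ p.1).card = _
  rw [hsplit, card_union_of_disjoint d2, card_union_of_disjoint d1]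
  rw [count_lt hn hA hB hAB τ]
  rw [count_n2 hn σ (Bwd_apply_n2 hn hA hB hAB τ) (Bwd_apply_n1 hn hA hB hAB τ)]
  rw [count_n1 hn σ (Bwd_apply_n1 hn hA hB hAB τ)]
  rw [card_gt n B hB, card_gt_ne n A B hA hB hAB]
  split_ifs <;> omega

lemma hh_inj {lo hi y1 y2 : ℕ} (h1 : lo < hi) (a1 : y1 ≠ lo) (a2 : y1 ≠ hi)
    (b1 : y2 ≠ lo) (b2 : y2 ≠ hi) (he : hh lo hi y1 = hh lo hi y2) : y1 = y2 := by
  unfold hh at he; split_ifs at he <;> omega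

/-- Let `n ≥ 2`, `q : ℂ` and `k, m ∈ {1, …, n}` with `k ≠ m`.  Then
`∑_{σ ∈ S_n, σ(n-1) = k, σ(n) = m} q ^ (2 ℓ(σ))
  = q ^ (4n - 2m - 2k - 2 + 2 δ_{k>m}) ∑_{τ ∈ S_{n-2}} q ^ (2 ℓ(τ))`.
(Permutations of `{1, …, n}` are modelled as permutations of `Fin n`, with
`i ∈ {1, …, n}` corresponding to `i - 1 ∈ Fin n`; so the conditions `σ(n-1) = k`
and `σ(n) = m` become `σ ⟨n-2⟩ = k - 1` and `σ ⟨n-1⟩ = m - 1`.) -/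
theorem stmt2 (n : ℕ) (hn : 2 ≤ n) (q : ℂ) (k m : ℕ)
    (hk1 : 1 ≤ k) (hk2 : k ≤ n) (hm1 : 1 ≤ m) (hm2 : m ≤ n) (hkm : k ≠ m) :
    ∑ σ ∈ Finset.univ.filter
        (fun σ : Equiv.Perm (Fin n) =>
          ((σ ⟨n - 2, by omega⟩ : ℕ) = k - 1) ∧ ((σ ⟨n - 1, by omega⟩ : ℕ) = m - 1)),
      q ^ (2 * inversions σ) =
    q ^ (4 * n - 2 * m - 2 * k - 2 + 2 * (if m < k then 1 else 0)) *
      ∑ τ : Equiv.Perm (Fin (n - 2)), q ^ (2 * inversions τ) := by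
  classical
  have hA : k - 1 < n := by omega
  have hB : m - 1 < n := by omega
  have hAB : k - 1 ≠ m - 1 := by omega
  have hle : n - 2 ≤ n := by omega
  have key : ∀ τ : Equiv.Perm (Fin (n - 2)),
      2 * inversions (Bwd hn hA hB hAB τ) =
        2 * inversions τ + (4 * n - 2 * m - 2 * k - 2 + 2 * (if m < k then 1 else 0)) := by
    intro τ
    rw [inversions_Bwd]
    split_ifs <;> omega
  have step1 : ∑ σ ∈ Finset.univ.filter
        (fun σ : Equiv.Perm (Fin n) =>
          ((σ ⟨n - 2, by omega⟩ : ℕ) = k - 1) ∧ ((σ ⟨n - 1, by omega⟩ : ℕ) = m - 1)),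
      q ^ (2 * inversions σ) =
      ∑ τ : Equiv.Perm (Fin (n - 2)),
        q ^ (2 * inversions τ + (4 * n - 2 * m - 2 * k - 2 +
          2 * (if m < k then 1 else 0))) := by
    apply Eq.symm
    apply Finset.sum_bij (i := fun τ _ => Bwd hn hA hB hAB τ)
    · intro τ _
      simp only [mem_filter, mem_univ, true_and]
      exact ⟨Bwd_apply_n2 hn hA hB hAB τ, Bwd_apply_n1 hn hA hB hAB τ⟩
    · intro τ1 _ τ2 _ heq
      apply Equiv.ext
      intro i
      have h1 := Bwd_apply_lt hn hA hB hAB τ1 (Fin.castLE hle i) i.isLt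
      have h2 := Bwd_apply_lt hn hA hB hAB τ2 (Fin.castLE hle i) i.isLt
      rw [heq] at h1
      have h4 := gg_inj (h1.symm.trans h2)
      have e5 : (⟨((Fin.castLE hle i : Fin n) : ℕ), i.isLt⟩ : Fin (n - 2)) = i := Fin.ext rfl
      rw [e5] at h4
      exact Fin.ext h4
    · intro σ' hσ'
      simp only [mem_filter, mem_univ, true_and] at hσ'
      obtain ⟨hc2, hc1⟩ := hσ'
      have hne : ∀ (p : Fin n), (p : ℕ) < n - 2 →
          (σ' p : ℕ) ≠ k - 1 ∧ (σ' p : ℕ) ≠ m - 1 := by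
        intro p hp
        constructor
        · intro h
          have e : σ' p = σ' ⟨n - 2, by omega⟩ := Fin.ext (h.trans hc2.symm)
          have : (p : ℕ) = n - 2 := congrArg Fin.val (σ'.injective e)
          omega
        · intro h
          have e : σ' p = σ' ⟨n - 1, by omega⟩ := Fin.ext (h.trans hc1.symm)
          have : (p : ℕ) = n - 1 := congrArg Fin.val (σ'.injective e)
          omega
      have hbnd : ∀ i : Fin (n - 2),
          hh (min (k - 1) (m - 1)) (max (k - 1) (m - 1))
            ((σ' (Fin.castLE hle i) : Fin n) : ℕ) < n - 2 := by
        intro i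
        have h := hne (Fin.castLE hle i) i.isLt
        exact hh_lt (by omega) (by omega) (σ' (Fin.castLE hle i)).isLt (by omega) (by omega)
      set f : Fin (n - 2) → Fin (n - 2) := fun i =>
        ⟨hh (min (k - 1) (m - 1)) (max (k - 1) (m - 1))
          ((σ' (Fin.castLE hle i) : Fin n) : ℕ), hbnd i⟩ with hf
      have finj : Function.Injective f := by
        intro i1 i2 he
        have hv : hh (min (k - 1) (m - 1)) (max (k - 1) (m - 1))
              ((σ' (Fin.castLE hle i1) : Fin n) : ℕ) =
            hh (min (k - 1) (m - 1)) (max (k - 1) (m - 1))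
              ((σ' (Fin.castLE hle i2) : Fin n) : ℕ) := congrArg Fin.val he
        have r1 := hne (Fin.castLE hle i1) i1.isLt
        have r2 := hne (Fin.castLE hle i2) i2.isLt
        have hval := hh_inj (by omega) (by omega) (by omega) (by omega) (by omega) hv
        have h6 : Fin.castLE hle i1 = Fin.castLE hle i2 := σ'.injective (Fin.ext hval)
        have h7 : (i1 : ℕ) = (i2 : ℕ) := congrArg (fun z : Fin n => (z : ℕ)) h6
        exact Fin.ext h7
      refine ⟨Equiv.ofBijective f (Finite.injective_iff_bijective.mp finj), mem_univ _, ?_⟩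
      apply Equiv.ext
      intro p
      by_cases hp : (p : ℕ) < n - 2
      · apply Fin.ext
        rw [Bwd_apply_lt hn hA hB hAB _ p hp]
        have hof : (Equiv.ofBijective f (Finite.injective_iff_bijective.mp finj)) ⟨(p : ℕ), hp⟩
            = f ⟨(p : ℕ), hp⟩ := rfl
        rw [hof]
        have h := hne (Fin.castLE hle ⟨(p : ℕ), hp⟩) hp
        have giv := gg_hh (lo := min (k - 1) (m - 1)) (hi := max (k - 1) (m - 1))
          (y := ((σ' (Fin.castLE hle ⟨(p : ℕ), hp⟩) : Fin n) : ℕ))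
          (by omega) (by omega) (by omega)
        exact giv.trans (congrArg (fun z => ((σ' z : Fin n) : ℕ)) (Fin.ext rfl))
      · by_cases hp2 : (p : ℕ) = n - 2
        · apply Fin.ext
          have hpe : p = ⟨n - 2, by omega⟩ := Fin.ext hp2
          rw [hpe, Bwd_apply_n2 hn hA hB hAB]
          exact hc2.symm
        · apply Fin.ext
          have hval : (p : ℕ) = n - 1 := by have := p.isLt; omega
          have hpe : p = ⟨n - 1, by omega⟩ := Fin.ext hval
          rw [hpe, Bwd_apply_n1 hn hA hB hAB]
          exact hc1.symm
    · intro τ _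
      exact congrArg (fun e => q ^ e) (key τ).symm
  rw [step1, Finset.mul_sum]
  refine Finset.sum_congr rfl fun τ _ => ?_
  rw [pow_add, mul_comm]
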